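/- Let D = (A,B) be a simple bipartite digraph with |A| = n ≤ m = |B|, and for y₁, y₂ ∈ B set c(y₁,y₂) = |N⁺(y₁) ∩ N⁻(y₂)|. If for some pair y₁, y₂ ∈ B one has 2·c(y₁,y₂)² < ((m−2)/(m−2−(δ_A−1)))^⌊(m−2)/c(y₁,y₂)⌋, then dib(D) ≥ c(y₁,y₂) + 1. -/

import Mathlib

open Classical

/-- A closed directed walk of length `n+1` inside the set `S`. -/
def IsClosedWalkIn {V : Type*} (E : V → V → Prop) (S : Set V) (n : ℕ)
    (c : Fin (n + 1) → V) : Prop :=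
  (∀ i, c i ∈ S) ∧ ∀ i : Fin (n + 1), E (c i) (c (i + 1))

/-- The set `S` induces no directed cycle (equivalently, no closed directed walk). -/
def AcyclicSet {V : Type*} (E : V → V → Prop) (S : Set V) : Prop :=
  ¬ ∃ (n : ℕ) (c : Fin (n + 1) → V), IsClosedWalkIn E S n c

/-- An acyclic coloring: every color class induces no directed cycle. -/
def AcyclicColoring {V : Type*} (E : V → V → Prop) {k : ℕ} (Γ : V → Fin k) : Prop :=
  ∀ i : Fin k, AcyclicSet E {v | Γ v = i}

/-- `u` is a b⁺-vertex: it has an out-neighbor of every other color. -/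
def IsBPlus {V : Type*} (E : V → V → Prop) {k : ℕ} (Γ : V → Fin k) (u : V) : Prop :=
  ∀ j : Fin k, j ≠ Γ u → ∃ w, E u w ∧ Γ w = j

/-- `u` is a b⁻-vertex: it has an in-neighbor of every other color. -/
def IsBMinus {V : Type*} (E : V → V → Prop) {k : ℕ} (Γ : V → Fin k) (u : V) : Prop :=
  ∀ j : Fin k, j ≠ Γ u → ∃ w, E w u ∧ Γ w = j

/-- A b-coloring: an acyclic coloring in which every color class contains a
b⁺-vertex and a b⁻-vertex. -/
def IsBColoring {V : Type*} (E : V → V → Prop) {k : ℕ} (Γ : V → Fin k) : Prop :=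
  AcyclicColoring E Γ ∧
    ∀ i : Fin k, (∃ u, Γ u = i ∧ IsBPlus E Γ u) ∧ (∃ u, Γ u = i ∧ IsBMinus E Γ u)

/-- The dib-chromatic number: the maximum number of colors of a b-coloring. -/
noncomputable def dib {V : Type*} (E : V → V → Prop) : ℕ :=
  sSup {k | ∃ Γ : V → Fin k, IsBColoring E Γ}

/-- The dichromatic number: the minimum number of colors of an acyclic coloring. -/
noncomputable def dc {V : Type*} (E : V → V → Prop) : ℕ :=
  sInf {k | ∃ Γ : V → Fin k, AcyclicColoring E Γ}

/-- Out-degree. -/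
noncomputable def outDeg {V : Type*} (E : V → V → Prop) (v : V) : ℕ := {w | E v w}.ncard

/-- In-degree. -/
noncomputable def inDeg {V : Type*} (E : V → V → Prop) (v : V) : ℕ := {w | E w v}.ncard

/-- `(A, B)` is a bipartition of the digraph: the parts are disjoint independent sets
covering all vertices, and every arc goes between the parts. -/
def IsBipartition {V : Type*} (E : V → V → Prop) (A B : Set V) : Prop :=
  Disjoint A B ∧ A ∪ B = Set.univ ∧
    ∀ u v, E u v → (u ∈ A ∧ v ∈ B) ∨ (u ∈ B ∧ v ∈ A)

/-- The digraph is weakly connected. -/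
def WeaklyConnected {V : Type*} (E : V → V → Prop) : Prop :=
  ∀ u v : V, Relation.ReflTransGen (fun a b => E a b ∨ E b a) u v

/-- The set `S` is weakly connected in the induced subdigraph. -/
def WeaklyConnectedOn {V : Type*} (E : V → V → Prop) (S : Set V) : Prop :=
  ∀ ⦃u⦄, u ∈ S → ∀ ⦃v⦄, v ∈ S →
    Relation.ReflTransGen (fun a b => (E a b ∨ E b a) ∧ a ∈ S ∧ b ∈ S) u v

/-- A simple digraph (oriented graph): no digons. -/
def SimpleDigraph' {V : Type*} (E : V → V → Prop) : Prop :=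
  ∀ u v, E u v → ¬ E v u
set_option maxHeartbeats 2000000

section Aux
variable {V : Type*}

private lemma acyclicSet_mono (E : V → V → Prop) {S T : Set V} (h : S ⊆ T)
    (hT : AcyclicSet E T) : AcyclicSet E S := by
  rintro ⟨n, c, hmem, hedge⟩
  exact hT ⟨n, c, fun i => h (hmem i), hedge⟩

private lemma acyclicSet_swap (E : V → V → Prop) (S : Set V)
    (h : AcyclicSet E S) : AcyclicSet (Function.swap E) S := by
  rintro ⟨n, c, hmem, hedge⟩
  refine h ⟨n, fun t => c (-t), fun t => hmem _, fun t => ?_⟩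
  have := hedge (-(t + 1))
  simpa [Function.swap, neg_add, sub_eq_add_neg] using this

open Fin.NatCast

private lemma cyclic_all {n : ℕ} (P : Fin (n + 1) → Prop)
    (h : ∀ t, P t → P (t + 1)) {t₀ : Fin (n + 1)} (h0 : P t₀) : ∀ t, P t := by
  have key : ∀ d : ℕ, P (t₀ + (d : Fin (n + 1))) := by
    intro d
    induction d with
    | zero => simpa using h0
    | succ d ih =>
        have : ((d + 1 : ℕ) : Fin (n + 1)) = (d : Fin (n + 1)) + 1 := by push_cast; ring
        rw [this, ← add_assoc]
        exact h _ ih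
  intro t
  have ht : t = t₀ + (((t - t₀).val : ℕ) : Fin (n + 1)) := by
    rw [Fin.cast_val_eq_self]; abel
  rw [ht]; exact key _

end Aux
section Aux2
variable {V : Type*}

private lemma recolor (E : V → V → Prop) {k : ℕ} (Γ : V → Fin k)
    (hΓ : AcyclicColoring E Γ) (i : Fin k)
    (h : ∀ u, Γ u = i → ∃ j, j ≠ i ∧ ∀ w, E u w → Γ w ≠ j) :
    ∃ Γ' : V → Fin k, AcyclicColoring E Γ' ∧ ∀ v, Γ' v ≠ i := by
  classical
  choose j hj1 hj2 using h
  refine ⟨fun v => if hv : Γ v = i then j v hv else Γ v, ?_, ?_⟩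
  · intro a
    rintro ⟨n, c, hmem, hedge⟩
    by_cases hnew : ∃ t, Γ (c t) = i
    · obtain ⟨t₀, ht₀⟩ := hnew
      have hall : ∀ t, Γ (c t) = i := by
        refine cyclic_all _ (fun t ht => ?_) ht₀
        by_contra hw
        have hm := hmem (t + 1)
        simp only [Set.mem_setOf_eq, dif_neg hw] at hm
        have hm' := hmem t
        simp only [Set.mem_setOf_eq, dif_pos ht] at hm'
        exact hj2 (c t) ht (c (t + 1)) (hedge t) (by rw [hm, hm'])
      exact hΓ i ⟨n, c, fun t => hall t, hedge⟩
    · push_neg at hnew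
      refine hΓ a ⟨n, c, fun t => ?_, hedge⟩
      have hm := hmem t
      simp only [Set.mem_setOf_eq, dif_neg (hnew t)] at hm
      exact hm
  · intro v
    by_cases hv : Γ v = i
    · simpa [dif_pos hv] using hj1 v hv
    · simpa [dif_neg hv] using hv

private lemma exists_bcol [Fintype V] [Nonempty V] (E : V → V → Prop)
    (hloop : ∀ v, ¬ E v v) : ∃ k, 1 ≤ k ∧ ∃ Γ : V → Fin k, IsBColoring E Γ := by
  classical
  set KS : Set ℕ := {k | ∃ Γ : V → Fin k, AcyclicColoring E Γ} with hKS
  have hne : (Fintype.card V) ∈ KS := by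
    refine ⟨fun v => (Fintype.equivFin V) v, fun i => ?_⟩
    rintro ⟨n, c, hmem, hedge⟩
    have h0 := hmem 0
    have h1 := hmem 1
    simp only [Set.mem_setOf_eq] at h0 h1
    have : c 0 = c (0 + 1) := by
      have := h0.trans h1.symm
      exact (Fintype.equivFin V).injective (by simpa using this)
    exact hloop (c 0) (this ▸ hedge 0)
  set k₀ := sInf KS with hk₀
  have hmem : k₀ ∈ KS := Nat.sInf_mem ⟨_, hne⟩
  have hk₀pos : 1 ≤ k₀ := by
    rcases Nat.eq_zero_or_pos k₀ with h | h
    · exfalso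
      rw [h] at hmem
      obtain ⟨Γ, -⟩ := hmem
      exact (Γ (Classical.arbitrary V)).elim0
    · exact h
  clear_value k₀
  obtain ⟨Γ, hΓ⟩ := hmem
  refine ⟨k₀, hk₀pos, Γ, hΓ, ?_⟩
  -- every color class has a b⁺ and b⁻ vertex
  by_contra hbad
  push_neg at hbad
  obtain ⟨i, hi⟩ := hbad
  -- produce a coloring avoiding color i
  have havoid : ∃ Γ' : V → Fin k₀, AcyclicColoring E Γ' ∧ ∀ v, Γ' v ≠ i := by
    by_cases hcase : ∃ u, Γ u = i ∧ IsBPlus E Γ u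
    · have hcase2 : ¬ ∃ u, Γ u = i ∧ IsBMinus E Γ u := by
        rintro ⟨u, hu, hm⟩; exact hi hcase u hu hm
      -- use swap
      have hΓs : AcyclicColoring (Function.swap E) Γ := fun a => acyclicSet_swap E _ (hΓ a)
      have h' : ∀ u, Γ u = i → ∃ j, j ≠ i ∧ ∀ w, Function.swap E u w → Γ w ≠ j := by
        intro u hu
        by_contra hco
        push_neg at hco
        refine hcase2 ⟨u, hu, fun j hj => ?_⟩
        obtain ⟨w, hw, hwj⟩ := hco j (by rwa [hu] at hj)
        exact ⟨w, hw, by tauto⟩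
      obtain ⟨Γ', hΓ', hΓ'i⟩ := recolor (Function.swap E) Γ hΓs i h'
      exact ⟨Γ', fun a => by
        have := acyclicSet_swap (Function.swap E) _ (hΓ' a)
        simpa [Function.swap] using this, hΓ'i⟩
    · have h' : ∀ u, Γ u = i → ∃ j, j ≠ i ∧ ∀ w, E u w → Γ w ≠ j := by
        intro u hu
        by_contra hco
        push_neg at hco
        refine hcase ⟨u, hu, fun j hj => ?_⟩
        obtain ⟨w, hw, hwj⟩ := hco j (by rwa [hu] at hj)
        exact ⟨w, hw, by tauto⟩
      exact recolor E Γ hΓ i h'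
  obtain ⟨Γ', hΓ', hΓ'i⟩ := havoid
  -- compress to k₀ - 1 colors
  obtain ⟨k', rfl⟩ : ∃ k', k₀ = k' + 1 := ⟨k₀ - 1, by omega⟩
  have hch : ∀ v, ∃ z : Fin k', i.succAbove z = Γ' v :=
    fun v => Fin.exists_succAbove_eq (hΓ'i v)
  choose Γ'' hΓ'' using hch
  have : k' ∈ KS := by
    refine ⟨Γ'', fun a => ?_⟩
    refine acyclicSet_mono E (T := {v | Γ' v = i.succAbove a}) ?_ (hΓ' _)
    intro v hv
    simp only [Set.mem_setOf_eq] at hv ⊢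
    rw [← hΓ'' v, hv]
  have h2 := Nat.sInf_le this
  rw [← hk₀] at h2
  omega

private lemma le_dib [Fintype V] (E : V → V → Prop) {k : ℕ} (Γ : V → Fin k)
    (h : IsBColoring E Γ) : k ≤ dib E := by
  have hbdd : BddAbove {k | ∃ Γ : V → Fin k, IsBColoring E Γ} := by
    refine ⟨Fintype.card V, fun k' ⟨Γ', h'⟩ => ?_⟩
    have hsurj : Function.Surjective Γ' := by
      intro i
      obtain ⟨⟨u, hu, -⟩, -⟩ := h'.2 i
      exact ⟨u, hu⟩
    simpa using Fintype.card_le_of_surjective Γ' hsurj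
  exact le_csSup hbdd ⟨Γ, h⟩

end Aux2
section Aux3

private lemma descKey (a M : ℕ) (h : a ≤ M) :
    ∀ e : ℕ, a.descFactorial e * M ^ e ≤ M.descFactorial e * a ^ e := by
  intro e
  induction e with
  | zero => simp
  | succ e ih =>
    rw [Nat.descFactorial_succ, Nat.descFactorial_succ, pow_succ, pow_succ]
    have hab : (a - e) * M ≤ (M - e) * a := by
      rw [Nat.sub_mul, Nat.sub_mul, mul_comm M a]
      exact Nat.sub_le_sub_left (Nat.mul_le_mul_left e h) (a * M)
    calc (a - e) * a.descFactorial e * (M ^ e * M)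
        = ((a - e) * M) * (a.descFactorial e * M ^ e) := by ring
      _ ≤ ((M - e) * a) * (M.descFactorial e * a ^ e) := Nat.mul_le_mul hab ih
      _ = (M - e) * M.descFactorial e * (a ^ e * a) := by ring

private lemma descCombine (K a M e : ℕ) (haM : a ≤ M) (heM : e ≤ M)
    (h : K * a ^ e < M ^ e) : K * a.descFactorial e < M.descFactorial e := by
  have hMd : 0 < M.descFactorial e := by
    rcases Nat.eq_zero_or_pos (M.descFactorial e) with h0 | h0
    · exact absurd (Nat.descFactorial_eq_zero_iff_lt.mp h0) (by omega)
    · exact h0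
  have : (K * a.descFactorial e) * M ^ e < M.descFactorial e * M ^ e := by
    calc (K * a.descFactorial e) * M ^ e
        = K * (a.descFactorial e * M ^ e) := by ring
      _ ≤ K * (M.descFactorial e * a ^ e) := Nat.mul_le_mul_left K (descKey a M haM e)
      _ = M.descFactorial e * (K * a ^ e) := by ring
      _ < M.descFactorial e * M ^ e := mul_lt_mul_of_pos_left h hMd
  exact Nat.lt_of_mul_lt_mul_right this

private lemma bad_card_bound {β : Type*} [Fintype β] [DecidableEq β] {cc e : ℕ} (j : Fin cc)
    (Tc : Finset β) (P : ((Fin cc × Fin e) ↪ β) → Prop) [DecidablePred P]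
    (hP : ∀ g, P g ↔ ∀ p : Fin e, g (j, p) ∈ Tc) :
    (Finset.univ.filter P).card
      ≤ Tc.card.descFactorial e *
        (Fintype.card β - e).descFactorial ((cc - 1) * e) := by
  classical
  set M := Fintype.card β with hM
  rcases Finset.eq_empty_or_nonempty (Finset.univ.filter P) with hemp | ⟨g₀, hg₀⟩
  · simp [hemp]
  -- complement equiv
  have hcomp : ∀ f : Fin e ↪ β, Fintype.card ((Set.range f)ᶜ : Set β) = M - e := by
    intro f
    rw [Fintype.card_compl_set, Fintype.card_range]
    simp [hM]
  let ψ : ∀ f : Fin e ↪ β, ((Set.range f)ᶜ : Set β) ≃ Fin (M - e) :=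
    fun f => Fintype.equivFinOfCardEq (hcomp f)
  -- for a good g, its data
  let fβ : ∀ g : (Fin cc × Fin e) ↪ β, Fin e ↪ β :=
    fun g => ⟨fun p => g (j, p), fun p p' hpp => by
      have := g.injective hpp; exact (Prod.mk.injEq _ _ _ _ ▸ this).2⟩
  let Φ : ∀ g : (Fin cc × Fin e) ↪ β, P g →
      (Fin e ↪ {x // x ∈ Tc}) × ({q : Fin cc // ¬ q = j} × Fin e ↪ Fin (M - e)) :=
    fun g hg =>
      (⟨fun p => ⟨g (j, p), (hP g).mp hg p⟩, fun p p' hpp => by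
          have : g (j, p) = g (j, p') := congrArg Subtype.val hpp
          have := g.injective this
          exact (Prod.mk.injEq _ _ _ _ ▸ this).2⟩,
       ⟨fun q => ψ (fβ g) ⟨g (q.1.1, q.2), by
          simp only [Set.mem_compl_iff, Set.mem_range, not_exists]
          intro p hp
          have := g.injective hp
          exact q.1.2 (Prod.mk.injEq _ _ _ _ ▸ this).1.symm⟩, by
          intro q q' hqq
          have h1 := (ψ (fβ g)).injective hqq
          have h2 : g (q.1.1, q.2) = g (q'.1.1, q'.2) := congrArg Subtype.val h1
          have h3 := g.injective h2
          have h4 := Prod.mk.injEq _ _ _ _ ▸ h3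
          exact Prod.ext (Subtype.ext h4.1) h4.2⟩)
  let Φtot : ((Fin cc × Fin e) ↪ β) →
      (Fin e ↪ {x // x ∈ Tc}) × ({q : Fin cc // ¬ q = j} × Fin e ↪ Fin (M - e)) :=
    fun g => if hg : P g then Φ g hg else Φ g₀ (Finset.mem_filter.mp hg₀).2
  have hψ : ∀ (f f' : Fin e ↪ β), f = f' → ∀ (b b' : β) (hb : b ∈ (Set.range f)ᶜ)
      (hb' : b' ∈ (Set.range f')ᶜ), ψ f ⟨b, hb⟩ = ψ f' ⟨b', hb'⟩ → b = b' := by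
    rintro f f' rfl b b' hb hb' h
    exact congrArg Subtype.val ((ψ f).injective h)
  have hinj : Set.InjOn Φtot (Finset.univ.filter P) := by
    intro g hg g' hg' heq
    have hgP : P g := (Finset.mem_filter.mp hg).2
    have hg'P : P g' := (Finset.mem_filter.mp hg').2
    simp only [Φtot, dif_pos hgP, dif_pos hg'P] at heq
    have h1 : ∀ p : Fin e, g (j, p) = g' (j, p) := by
      intro p
      have := congrArg (fun z => ((z.1 : Fin e ↪ {x // x ∈ Tc}) p : β)) heq
      exact this
    have hfβ : fβ g = fβ g' := by
      apply DFunLike.ext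
      intro p
      exact h1 p
    have h2 : ∀ (q : {q : Fin cc // ¬ q = j}) (p : Fin e),
        g (q.1, p) = g' (q.1, p) := by
      intro q p
      have h2' := congrArg (fun z => (z.2 : {q : Fin cc // ¬ q = j} × Fin e ↪ Fin (M - e)) (q, p)) heq
      exact hψ (fβ g) (fβ g') hfβ _ _ _ _ h2'
    apply DFunLike.ext
    rintro ⟨i, p⟩
    by_cases hij : i = j
    · subst hij; exact h1 p
    · exact h2 ⟨i, hij⟩ p
  calc (Finset.univ.filter P).card
      ≤ Fintype.card ((Fin e ↪ {x // x ∈ Tc}) × ({q : Fin cc // ¬ q = j} × Fin e ↪ Fin (M - e))) := by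
        have := Finset.card_le_card_of_injOn Φtot (fun g _ => Finset.mem_univ (Φtot g)) hinj
        simpa using this
    _ = Tc.card.descFactorial e * (M - e).descFactorial ((cc - 1) * e) := by
        rw [Fintype.card_prod, Fintype.card_embedding_eq, Fintype.card_embedding_eq]
        congr 1
        · rw [Fintype.card_coe, Fintype.card_fin]
        · rw [Fintype.card_fin, Fintype.card_prod, Fintype.card_fin,
            Fintype.card_subtype_compl, Fintype.card_subtype_eq, Fintype.card_fin]

end Aux3
section Aux4

set_option maxHeartbeats 1000000 in
private lemma exists_cover {β : Type*} [Fintype β] {c e s : ℕ} (hc : 0 < c) (he : 0 < e)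
    (T : Fin c × Bool → Finset β) (hT : ∀ t, s ≤ (T t).card)
    (hce : c * e ≤ Fintype.card β)
    (hkey : 2 * c * c * ((Fintype.card β - s).descFactorial e)
      < (Fintype.card β).descFactorial e) :
    ∃ χ : β → Fin c, ∀ (t : Fin c × Bool) (j : Fin c), ∃ b, b ∈ T t ∧ χ b = j := by
  classical
  set M := Fintype.card β with hM
  set Bad : (Fin c × Bool) × Fin c → Finset ((Fin c × Fin e) ↪ β) :=
    fun tj => Finset.univ.filter (fun g => ∀ p : Fin e, g (tj.2, p) ∉ T tj.1) with hBad
  have hbadcard : ∀ tj, (Bad tj).card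
      ≤ (M - s).descFactorial e * (M - e).descFactorial ((c - 1) * e) := by
    intro tj
    have h1 := bad_card_bound (β := β) tj.2 (T tj.1)ᶜ
      (fun g => ∀ p : Fin e, g (tj.2, p) ∉ T tj.1)
      (fun g => by simp [Finset.mem_compl])
    refine le_trans h1 (Nat.mul_le_mul_right _ (Nat.descFactorial_le e ?_))
    rw [Finset.card_compl]
    exact Nat.sub_le_sub_left (hT tj.1) M
  have hsplit : (M - e).descFactorial (c * e - e) * M.descFactorial e
      = M.descFactorial (c * e) :=
    Nat.descFactorial_mul_descFactorial (Nat.le_mul_of_pos_left e hc)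
  have hXpos : 0 < (M - e).descFactorial ((c - 1) * e) := by
    have h1 : (c - 1) * e + e ≤ c * e := by
      cases c with
      | zero => omega
      | succ c => rw [Nat.succ_sub_one, Nat.succ_mul]
    rcases Nat.eq_zero_or_pos ((M - e).descFactorial ((c - 1) * e)) with h0 | h0
    · have h2 := Nat.descFactorial_eq_zero_iff_lt.mp h0
      omega
    · exact h0
  have hc1e : (c - 1) * e = c * e - e := by
    cases c with | zero => omega | succ c => simp [Nat.succ_mul]
  -- total bad count is less than the number of embeddings
  have htotal : (Finset.univ.biUnion Bad).card < Fintype.card ((Fin c × Fin e) ↪ β) := by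
    calc (Finset.univ.biUnion Bad).card
        ≤ ∑ tj : (Fin c × Bool) × Fin c, (Bad tj).card := Finset.card_biUnion_le
      _ ≤ (Fintype.card ((Fin c × Bool) × Fin c)) *
            ((M - s).descFactorial e * (M - e).descFactorial ((c - 1) * e)) := by
          rw [← Finset.card_univ, ← smul_eq_mul]
          exact Finset.sum_le_card_nsmul _ _ _ (fun tj _ => hbadcard tj)
      _ = (2 * c * c * (M - s).descFactorial e) * (M - e).descFactorial ((c - 1) * e) := by
          simp only [Fintype.card_prod, Fintype.card_fin, Fintype.card_bool]
          ring
      _ < M.descFactorial e * (M - e).descFactorial ((c - 1) * e) := by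
          exact Nat.mul_lt_mul_of_lt_of_le hkey (le_refl _) hXpos
      _ = Fintype.card ((Fin c × Fin e) ↪ β) := by
          rw [Fintype.card_embedding_eq, Fintype.card_prod, Fintype.card_fin, Fintype.card_fin,
            ← hM, ← hsplit, hc1e]
          ring
  obtain ⟨g, hg⟩ : ∃ g : (Fin c × Fin e) ↪ β, g ∉ Finset.univ.biUnion Bad := by
    by_contra hco
    push_neg at hco
    have : (Finset.univ : Finset ((Fin c × Fin e) ↪ β)) ⊆ Finset.univ.biUnion Bad :=
      fun g _ => hco g
    have := Finset.card_le_card this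
    rw [Finset.card_univ] at this
    omega
  refine ⟨fun b => if h : ∃ q : Fin c × Fin e, g q = b then (Classical.choose h).1 else ⟨0, hc⟩,
    fun t j => ?_⟩
  have hnb : g ∉ Bad (t, j) := fun hmem => hg (Finset.mem_biUnion.mpr ⟨(t, j), Finset.mem_univ _, hmem⟩)
  rw [hBad] at hnb
  simp only [Finset.mem_filter, Finset.mem_univ, true_and, not_forall, not_not] at hnb
  obtain ⟨p, hp⟩ := hnb
  refine ⟨g (j, p), hp, ?_⟩
  have hex : ∃ q : Fin c × Fin e, g q = g (j, p) := ⟨(j, p), rfl⟩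
  show (if h : ∃ q : Fin c × Fin e, g q = g (j, p) then (Classical.choose h).1 else ⟨0, hc⟩) = j
  rw [dif_pos hex]
  have := g.injective (Classical.choose_spec hex)
  rw [this]

end Aux4

/-- if 2·c(y₁,y₂)² < ((m−2)/(m−2−(δ_A−1)))^⌊(m−2)/c(y₁,y₂)⌋ for some pair
y₁, y₂ ∈ B, then dib ≥ c(y₁,y₂) + 1. -/
theorem stmt16 {V : Type*} [Fintype V] (E : V → V → Prop) (A B : Set V)
    (hbip : IsBipartition E A B) (hsimple : SimpleDigraph' E)
    (n m : ℕ) (hA : A.ncard = n) (hB : B.ncard = m) (hnm : n ≤ m)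
    (δA : ℕ) (hδA : δA = sInf ((fun x => min (outDeg E x) (inDeg E x)) '' A))
    (y₁ y₂ : V) (hy₁ : y₁ ∈ B) (hy₂ : y₂ ∈ B) (hyne : y₁ ≠ y₂)
    (c : ℕ) (hc : c = ({w | E y₁ w} ∩ {w | E w y₂}).ncard)
    (hineq : 2 * (c : ℝ) ^ 2 <
      (((m : ℝ) - 2) / ((m : ℝ) - 2 - ((δA : ℝ) - 1))) ^ ((m - 2) / c)) :
    c + 1 ≤ dib E := by
  classical
  obtain ⟨hdisj, hcover, harc⟩ := hbip
  have hloop : ∀ v, ¬ E v v := fun v h => hsimple v v h h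
  have hAB : ∀ u, u ∈ A → u ∈ B → False := fun u hA' hB' => Set.disjoint_left.mp hdisj hA' hB'
  have hmemAB : ∀ v : V, v ∈ A ∨ v ∈ B := by
    intro v
    have : v ∈ A ∪ B := hcover ▸ Set.mem_univ v
    exact this
  have harcBA : ∀ u v, E u v → u ∈ B → v ∈ A := by
    intro u v h hu
    rcases harc u v h with ⟨h1, _⟩ | ⟨_, h2⟩
    · exact absurd hu (fun hh => hAB u h1 hh)
    · exact h2
  have harcAB : ∀ u v, E u v → u ∈ A → v ∈ B := by
    intro u v h hu
    rcases harc u v h with ⟨_, h2⟩ | ⟨h1, _⟩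
    · exact h2
    · exact absurd hu (fun hh => hAB u hh h1)
  rcases Nat.eq_zero_or_pos c with hc0 | hcpos
  · -- degenerate case: c = 0, just need some b-coloring
    haveI : Nonempty V := ⟨y₁⟩
    obtain ⟨k, hk1, Γ, hΓ⟩ := exists_bcol E hloop
    have := le_dib E Γ hΓ
    omega
  -- main case
  set S : Set V := {w | E y₁ w} ∩ {w | E w y₂} with hSdef
  have hSA : ∀ w ∈ S, w ∈ A := fun w hw => harcBA y₁ w hw.1 hy₁
  haveI : Fintype ↥S := Set.Finite.fintype (Set.toFinite S)
  have hcardS : Fintype.card ↥S = c := by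
    rw [hc, ← Nat.card_coe_set_eq, Nat.card_eq_fintype_card]
  let eS : ↥S ≃ Fin c := Fintype.equivFinOfCardEq hcardS
  set x : Fin c → V := fun i => ↑(eS.symm i) with hxdef
  have hxS : ∀ i, x i ∈ S := fun i => (eS.symm i).2
  have hxA : ∀ i, x i ∈ A := fun i => hSA _ (hxS i)
  have hxE1 : ∀ i, E y₁ (x i) := fun i => (hxS i).1
  have hxE2 : ∀ i, E (x i) y₂ := fun i => (hxS i).2
  set B' : Set V := B \ {y₁, y₂} with hB'def
  haveI : Fintype ↥B' := Set.Finite.fintype (Set.toFinite B')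
  have hm2 : 2 ≤ m := by
    rw [← hB]
    have hsub : ({y₁, y₂} : Set V) ⊆ B := by
      intro z hz; rcases hz with rfl | rfl; exacts [hy₁, hy₂]
    have h1 : ({y₁, y₂} : Set V).ncard ≤ B.ncard :=
      Set.ncard_le_ncard hsub (Set.toFinite B)
    rwa [Set.ncard_pair hyne] at h1
  set M := m - 2 with hMdef
  have hMcard : Fintype.card ↥B' = M := by
    have hsub : ({y₁, y₂} : Set V) ⊆ B := by
      intro z hz; rcases hz with rfl | rfl; exacts [hy₁, hy₂]
    rw [← Nat.card_eq_fintype_card, Nat.card_coe_set_eq, hB'def,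
      Set.ncard_diff hsub, hB, Set.ncard_pair hyne]
  set e := M / c with hedef
  have hcR : (1 : ℝ) ≤ (c : ℝ) := by exact_mod_cast hcpos
  have he1 : 0 < e := by
    by_contra h0
    have he0 : e = 0 := Nat.eq_zero_of_not_pos h0
    rw [he0, pow_zero] at hineq
    nlinarith
  have heM : e ≤ M := by rw [hedef]; exact Nat.div_le_self M c
  have hce : c * e ≤ M := by rw [hedef, mul_comm]; exact Nat.div_mul_le_self M c
  have hdeg : ∀ i, δA ≤ outDeg E (x i) ∧ δA ≤ inDeg E (x i) := by
    intro i
    have hmem : min (outDeg E (x i)) (inDeg E (x i)) ∈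
        ((fun z => min (outDeg E z) (inDeg E z)) '' A) := ⟨x i, hxA i, rfl⟩
    have h1 : δA ≤ min (outDeg E (x i)) (inDeg E (x i)) := hδA ▸ Nat.sInf_le hmem
    exact ⟨le_trans h1 (min_le_left _ _), le_trans h1 (min_le_right _ _)⟩
  set T : Fin c × Bool → Finset ↥B' :=
    fun t => Finset.univ.filter (fun b => if t.2 then E (x t.1) ↑b else E ↑b (x t.1)) with hTdef
  have hTcard : ∀ t, δA - 1 ≤ (T t).card := by
    rintro ⟨i, bb⟩
    rcases bb with _ | _
    · -- in-neighborhood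
      have hOB : ∀ w, E w (x i) → w ∈ B := fun w hw => by
        rcases harc w (x i) hw with ⟨h1, h2⟩ | ⟨h1, _⟩
        · exact absurd (hxA i) (fun hh => hAB _ hh h2)
        · exact h1
      have hy₂O : ¬ E y₂ (x i) := fun h => hsimple (x i) y₂ (hxE2 i) h
      have hsub : {w | E w (x i)} ⊆
          (↑(Finset.image Subtype.val (T (i, false))) : Set V) ∪ {y₁} := by
        intro w hw
        by_cases hwy : w = y₁
        · exact Or.inr (by simp [hwy])
        · have hwB' : w ∈ B' := by
            rw [hB'def]
            refine ⟨hOB w hw, ?_⟩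
            intro hmem
            rcases hmem with rfl | rfl
            · exact hwy rfl
            · exact hy₂O hw
          refine Or.inl ?_
          simp only [Finset.coe_image, Set.mem_image, Finset.mem_coe]
          exact ⟨⟨w, hwB'⟩, by simp [hTdef]; exact hw, rfl⟩
      have h1 : δA ≤ {w | E w (x i)}.ncard := (hdeg i).2
      have h2 : {w | E w (x i)}.ncard ≤ (T (i, false)).card + 1 := by
        calc {w | E w (x i)}.ncard
            ≤ ((↑(Finset.image Subtype.val (T (i, false))) : Set V) ∪ {y₁}).ncard :=
              Set.ncard_le_ncard hsub (Set.Finite.union (Set.toFinite _) (Set.toFinite _))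
          _ ≤ (↑(Finset.image Subtype.val (T (i, false))) : Set V).ncard + ({y₁} : Set V).ncard :=
              Set.ncard_union_le _ _
          _ = (T (i, false)).card + 1 := by
              rw [Set.ncard_coe_finset, Set.ncard_singleton,
                Finset.card_image_of_injective _ Subtype.val_injective]
      omega
    · -- out-neighborhood
      have hOB : ∀ w, E (x i) w → w ∈ B := fun w hw => harcAB _ _ hw (hxA i)
      have hy₁O : ¬ E (x i) y₁ := fun h => hsimple y₁ (x i) (hxE1 i) h
      have hsub : {w | E (x i) w} ⊆
          (↑(Finset.image Subtype.val (T (i, true))) : Set V) ∪ {y₂} := by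
        intro w hw
        by_cases hwy : w = y₂
        · exact Or.inr (by simp [hwy])
        · have hwB' : w ∈ B' := by
            rw [hB'def]
            refine ⟨hOB w hw, ?_⟩
            intro hmem
            rcases hmem with rfl | rfl
            · exact hy₁O hw
            · exact hwy rfl
          refine Or.inl ?_
          simp only [Finset.coe_image, Set.mem_image, Finset.mem_coe]
          exact ⟨⟨w, hwB'⟩, by simp [hTdef]; exact hw, rfl⟩
      have h1 : δA ≤ {w | E (x i) w}.ncard := (hdeg i).1
      have h2 : {w | E (x i) w}.ncard ≤ (T (i, true)).card + 1 := by
        calc {w | E (x i) w}.ncard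
            ≤ ((↑(Finset.image Subtype.val (T (i, true))) : Set V) ∪ {y₂}).ncard :=
              Set.ncard_le_ncard hsub (Set.Finite.union (Set.toFinite _) (Set.toFinite _))
          _ ≤ (↑(Finset.image Subtype.val (T (i, true))) : Set V).ncard + ({y₂} : Set V).ncard :=
              Set.ncard_union_le _ _
          _ = (T (i, true)).card + 1 := by
              rw [Set.ncard_coe_finset, Set.ncard_singleton,
                Finset.card_image_of_injective _ Subtype.val_injective]
      omega
  -- the key counting inequality
  have hkey : 2 * c * c * ((M - (δA - 1)).descFactorial e) < M.descFactorial e := by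
    have hMdpos : 0 < M.descFactorial e := by
      rcases Nat.eq_zero_or_pos (M.descFactorial e) with h0 | h0
      · have := Nat.descFactorial_eq_zero_iff_lt.mp h0
        omega
      · exact h0
    by_cases hMs : M ≤ δA - 1
    · have h0 : M - (δA - 1) = 0 := by omega
      obtain ⟨e', hee⟩ : ∃ e', e = e' + 1 := ⟨e - 1, by omega⟩
      rw [h0, hee, Nat.zero_descFactorial_succ]
      rw [hee] at hMdpos
      simpa using hMdpos
    · push_neg at hMs
      have hδ1 : 1 ≤ δA := by
        by_contra hδ0
        have hδ0' : δA = 0 := by omega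
        have hMR : ((m : ℝ) - 2) = (M : ℝ) := by
          rw [hMdef, Nat.cast_sub hm2]; norm_num
        have hb0 : (0 : ℝ) ≤ ((m : ℝ) - 2) / ((m : ℝ) - 2 - ((δA : ℝ) - 1)) := by
          apply div_nonneg
          · rw [hMR]; positivity
          · rw [hδ0', hMR]; push_cast; linarith [Nat.cast_nonneg (α := ℝ) M]
        have hb1 : ((m : ℝ) - 2) / ((m : ℝ) - 2 - ((δA : ℝ) - 1)) < 1 := by
          rw [hδ0', hMR]
          rw [div_lt_one (by push_cast; linarith [Nat.cast_nonneg (α := ℝ) M])]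
          push_cast; linarith
        have := pow_lt_one₀ hb0 hb1 (by omega : e ≠ 0)
        nlinarith
      -- now δA ≥ 1 and M > δA - 1
      set a := M - (δA - 1) with hadef
      have haM : a ≤ M := by omega
      have ha1 : 1 ≤ a := by omega
      have hcast : ((m : ℝ) - 2 - ((δA : ℝ) - 1)) = (a : ℝ) := by
        rw [hadef, Nat.cast_sub (by omega : δA - 1 ≤ M), Nat.cast_sub hδ1,
          hMdef, Nat.cast_sub hm2]
        push_cast; ring
      have hMR : ((m : ℝ) - 2) = (M : ℝ) := by
        rw [hMdef, Nat.cast_sub hm2]; norm_num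
      rw [hcast, hMR] at hineq
      have haR : (0 : ℝ) < (a : ℝ) := by exact_mod_cast ha1
      have h2 : 2 * (c : ℝ) ^ 2 * (a : ℝ) ^ e < ((M : ℝ) / (a : ℝ)) ^ e * (a : ℝ) ^ e :=
        mul_lt_mul_of_pos_right hineq (pow_pos haR e)
      rw [div_pow, div_mul_cancel₀] at h2
      swap
      · positivity
      have h3 : ((2 * c * c * a ^ e : ℕ) : ℝ) < ((M ^ e : ℕ) : ℝ) := by
        push_cast
        nlinarith [h2]
      have h4 : 2 * c * c * a ^ e < M ^ e := by exact_mod_cast h3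
      exact descCombine (2 * c * c) a M e haM heM h4
  -- find the good coloring of B'
  have hce' : c * e ≤ Fintype.card ↥B' := by rw [hMcard]; exact hce
  have hkey' : 2 * c * c * ((Fintype.card ↥B' - (δA - 1)).descFactorial e)
      < (Fintype.card ↥B').descFactorial e := by rw [hMcard]; exact hkey
  obtain ⟨χ₀, hχ₀⟩ := exists_cover hcpos he1 T hTcard hce' hkey'
  -- build the b-coloring with c + 1 colors
  set Γ : V → Fin (c + 1) := fun v =>
    if h : v ∈ S then (eS ⟨v, h⟩).succ
    else if h' : v ∈ B' then (χ₀ ⟨v, h'⟩).succ else 0 with hΓdef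
  have hΓx : ∀ i, Γ (x i) = Fin.succ i := by
    intro i
    have h1 : (⟨x i, hxS i⟩ : ↥S) = eS.symm i := Subtype.ext rfl
    simp only [hΓdef]
    rw [dif_pos (hxS i), h1, Equiv.apply_symm_apply]
  have hy₁S : y₁ ∉ S := fun h => hAB y₁ (hSA _ h) hy₁
  have hy₂S : y₂ ∉ S := fun h => hAB y₂ (hSA _ h) hy₂
  have hy₁B' : y₁ ∉ B' := fun h => h.2 (Or.inl rfl)
  have hy₂B' : y₂ ∉ B' := fun h => h.2 (Or.inr rfl)
  have hΓy₁ : Γ y₁ = 0 := by simp only [hΓdef]; rw [dif_neg hy₁S, dif_neg hy₁B']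
  have hΓy₂ : Γ y₂ = 0 := by simp only [hΓdef]; rw [dif_neg hy₂S, dif_neg hy₂B']
  have hΓb : ∀ b : ↥B', Γ ↑b = (χ₀ b).succ := by
    intro b
    have hbS : (↑b : V) ∉ S := fun h => hAB ↑b (hSA _ h) b.2.1
    simp only [hΓdef]
    rw [dif_neg hbS, dif_pos b.2, Subtype.coe_eta]
  have hΓ0 : ∀ v, Γ v = 0 → (v ∈ A ∧ v ∉ S) ∨ v = y₁ ∨ v = y₂ := by
    intro v hv
    by_cases hvS : v ∈ S
    · simp only [hΓdef] at hv; rw [dif_pos hvS] at hv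
      exact absurd hv (Fin.succ_ne_zero _)
    by_cases hvB' : v ∈ B'
    · simp only [hΓdef] at hv; rw [dif_neg hvS, dif_pos hvB'] at hv
      exact absurd hv (Fin.succ_ne_zero _)
    rcases hmemAB v with hvA | hvB
    · exact Or.inl ⟨hvA, hvS⟩
    · right
      have : v ∈ ({y₁, y₂} : Set V) := by
        by_contra hne
        exact hvB' ⟨hvB, hne⟩
      rcases this with h | h
      · exact Or.inl h
      · exact Or.inr h
  have hΓsucc : ∀ v (i : Fin c), Γ v = Fin.succ i →
      v = x i ∨ (∃ b : ↥B', ↑b = v ∧ χ₀ b = i) := by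
    intro v i hv
    by_cases hvS : v ∈ S
    · simp only [hΓdef] at hv; rw [dif_pos hvS] at hv
      left
      have h1 : eS ⟨v, hvS⟩ = i := by
        exact Fin.succ_injective _ hv
      have h2 : (⟨v, hvS⟩ : ↥S) = eS.symm i := by
        rw [← h1, Equiv.symm_apply_apply]
      exact congrArg Subtype.val h2
    by_cases hvB' : v ∈ B'
    · simp only [hΓdef] at hv; rw [dif_neg hvS, dif_pos hvB'] at hv
      exact Or.inr ⟨⟨v, hvB'⟩, rfl, Fin.succ_injective _ hv⟩
    · simp only [hΓdef] at hv; rw [dif_neg hvS, dif_neg hvB'] at hv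
      exact absurd hv.symm (Fin.succ_ne_zero _)
  -- acyclicity
  have hacyc : AcyclicColoring E Γ := by
    intro col
    induction col using Fin.cases with
    | zero =>
      rintro ⟨nn, cw, hmem, hedge⟩
      have hmem0 : ∀ t, (cw t ∈ A ∧ cw t ∉ S) ∨ cw t = y₁ ∨ cw t = y₂ :=
        fun t => hΓ0 _ (hmem t)
      have hnoy₁ : ∀ t, cw t ≠ y₁ := by
        intro t ht
        have hu : E y₁ (cw (t + 1)) := ht ▸ hedge t
        have huA : cw (t + 1) ∈ A := harcBA _ _ hu hy₁
        have huS : cw (t + 1) ∉ S := by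
          rcases hmem0 (t + 1) with ⟨_, h2⟩ | h | h
          · exact h2
          · exact absurd (h ▸ huA) (fun hh => hAB y₁ hh hy₁)
          · exact absurd (h ▸ huA) (fun hh => hAB y₂ hh hy₂)
        have hv : E (cw (t + 1)) (cw (t + 1 + 1)) := hedge (t + 1)
        have hvB : cw (t + 1 + 1) ∈ B := harcAB _ _ hv huA
        rcases hmem0 (t + 1 + 1) with ⟨h1, _⟩ | h | h
        · exact hAB _ h1 hvB
        · exact hsimple y₁ _ hu (h ▸ hv)
        · exact huS ⟨hu, h ▸ hv⟩
      have hBt : ∃ t, cw t ∈ B := by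
        rcases harc _ _ (hedge 0) with ⟨_, h2⟩ | ⟨h1, _⟩
        · exact ⟨0 + 1, h2⟩
        · exact ⟨0, h1⟩
      obtain ⟨t, htB⟩ := hBt
      have hty₂ : cw t = y₂ := by
        rcases hmem0 t with ⟨h1, _⟩ | h | h
        · exact absurd htB (fun hh => hAB _ h1 hh)
        · exact absurd h (hnoy₁ t)
        · exact h
      have hu : E y₂ (cw (t + 1)) := hty₂ ▸ hedge t
      have huA : cw (t + 1) ∈ A := harcBA _ _ hu hy₂
      have hv : E (cw (t + 1)) (cw (t + 1 + 1)) := hedge (t + 1)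
      have hvB : cw (t + 1 + 1) ∈ B := harcAB _ _ hv huA
      have hvy₂ : cw (t + 1 + 1) = y₂ := by
        rcases hmem0 (t + 1 + 1) with ⟨h1, _⟩ | h | h
        · exact absurd hvB (fun hh => hAB _ h1 hh)
        · exact absurd h (hnoy₁ _)
        · exact h
      exact hsimple y₂ _ hu (hvy₂ ▸ hv)
    | succ i =>
      rintro ⟨nn, cw, hmem, hedge⟩
      have hmemi : ∀ t, cw t = x i ∨ ∃ b : ↥B', ↑b = cw t ∧ χ₀ b = i :=
        fun t => hΓsucc _ _ (hmem t)
      have hBmem : ∀ t, cw t ≠ x i → cw t ∈ B := by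
        intro t ht
        rcases hmemi t with h | ⟨b, hb, _⟩
        · exact absurd h ht
        · rw [← hb]; exact b.2.1
      have hxex : ∃ t, cw t = x i := by
        by_contra hno
        push_neg at hno
        rcases harc _ _ (hedge 0) with ⟨h1, _⟩ | ⟨_, h2⟩
        · exact hAB _ h1 (hBmem 0 (hno 0))
        · exact hAB _ h2 (hBmem (0 + 1) (hno (0 + 1)))
      obtain ⟨t, htx⟩ := hxex
      have hu : E (x i) (cw (t + 1)) := htx ▸ hedge t
      have hune : cw (t + 1) ≠ x i := fun h => hloop (x i) (h ▸ hu)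
      have huB : cw (t + 1) ∈ B := hBmem _ hune
      have hv : E (cw (t + 1)) (cw (t + 1 + 1)) := hedge (t + 1)
      have hvx : cw (t + 1 + 1) = x i := by
        by_contra h
        exact hAB _ (harcBA _ _ hv huB) (hBmem _ h)
      exact hsimple (x i) _ hu (hvx ▸ hv)
  -- b-vertices
  have hbcol : IsBColoring E Γ := by
    refine ⟨hacyc, fun col => ?_⟩
    induction col using Fin.cases with
    | zero =>
      constructor
      · refine ⟨y₁, hΓy₁, fun j hj => ?_⟩
        have hj0 : j ≠ 0 := by rwa [hΓy₁] at hj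
        refine ⟨x (j.pred hj0), hxE1 _, ?_⟩
        rw [hΓx, Fin.succ_pred]
      · refine ⟨y₂, hΓy₂, fun j hj => ?_⟩
        have hj0 : j ≠ 0 := by rwa [hΓy₂] at hj
        refine ⟨x (j.pred hj0), hxE2 _, ?_⟩
        rw [hΓx, Fin.succ_pred]
    | succ i =>
      have hbx : ∀ j : Fin (c + 1), j ≠ Fin.succ i →
          (∃ w, E (x i) w ∧ Γ w = j) ∧ (∃ w, E w (x i) ∧ Γ w = j) := by
        intro j _
        rcases Fin.eq_zero_or_eq_succ j with rfl | ⟨j', rfl⟩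
        · exact ⟨⟨y₂, hxE2 i, hΓy₂⟩, ⟨y₁, hxE1 i, hΓy₁⟩⟩
        · obtain ⟨b, hbT, hbχ⟩ := hχ₀ (i, true) j'
          obtain ⟨b2, hbT2, hbχ2⟩ := hχ₀ (i, false) j'
          have h1 : E (x i) ↑b := by
            have := (Finset.mem_filter.mp hbT).2
            simpa using this
          have h2 : E ↑b2 (x i) := by
            have := (Finset.mem_filter.mp hbT2).2
            simpa using this
          exact ⟨⟨↑b, h1, by rw [hΓb, hbχ]⟩, ⟨↑b2, h2, by rw [hΓb b2, hbχ2]⟩⟩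
      constructor
      · exact ⟨x i, hΓx i, fun j hj => (hbx j (by rwa [hΓx i] at hj)).1⟩
      · exact ⟨x i, hΓx i, fun j hj => (hbx j (by rwa [hΓx i] at hj)).2⟩
  exact le_dib E Γ hbcol
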